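/- Active Set selection criterion (Proposition, Section 4.2): Fix a point (x, x_out, z) ∈ ℝ^n × ℝ^m × ℝ^m. Define the mask I* ∈ {0,1}^{m×n} entrywise by I*[i,j] = 1 if ((1 − z[i])Ľ[i,j] + z[i]Ǔ[i,j] − x[j])·W[i,j] ≥ 0 and I*[i,j] = 0 otherwise. Then for every binary mask I ∈ {0,1}^{m×n} and every neuron i ∈ {1,…,m}, the violations satisfy v_i(I*) ≥ v_i(I); in particular I* maximizes the total violation Σ_{i=1}^m v_i(I) over all binary masks I ∈ {0,1}^{m×n}, i.e., I* is the mask of the most violated Anderson constraint at (x, x_out, z), and the maximization decomposes row-wise. -/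

import Mathlib

open Finset

/-- `Ľ[i,j]`: lower corner of the box assigned according to the sign of `W[i,j]`. -/
noncomputable def cLmat {m n : ℕ} (W : Fin m → Fin n → ℝ) (l u : Fin n → ℝ)
    (i : Fin m) (j : Fin n) : ℝ :=
  if 0 ≤ W i j then l j else u j

/-- `Ǔ[i,j]`: upper corner of the box assigned according to the sign of `W[i,j]`. -/
noncomputable def cUmat {m n : ℕ} (W : Fin m → Fin n → ℝ) (l u : Fin n → ℝ)
    (i : Fin m) (j : Fin n) : ℝ :=
  if 0 ≤ W i j then u j else l j

/-- Right-hand side of the Anderson constraint for neuron `i` with mask `I`. -/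
noncomputable def andersonRHS {m n : ℕ} (W : Fin m → Fin n → ℝ) (b : Fin m → ℝ)
    (l u : Fin n → ℝ) (I : Fin m → Fin n → ℝ)
    (x : Fin n → ℝ) (z : Fin m → ℝ) (i : Fin m) : ℝ :=
  (∑ j, W i j * I i j * x j) + z i * b i
    - (∑ j, W i j * I i j * cLmat W l u i j) * (1 - z i)
    + (∑ j, W i j * (1 - I i j) * cUmat W l u i j) * z i

/-- Violation of the Anderson constraint for neuron `i` with mask `I` at
`(x, x_out, z)`. -/
noncomputable def violation {m n : ℕ} (W : Fin m → Fin n → ℝ) (b : Fin m → ℝ)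
    (l u : Fin n → ℝ) (I : Fin m → Fin n → ℝ)
    (x : Fin n → ℝ) (xout z : Fin m → ℝ) (i : Fin m) : ℝ :=
  xout i - andersonRHS W b l u I x z i

/-- Active Set selection criterion (Proposition, Section 4.2): the mask `I*`
defined entrywise by the sign test
`((1 − z[i])Ľ[i,j] + z[i]Ǔ[i,j] − x[j])·W[i,j] ≥ 0` maximizes the violation
of the Anderson constraint at every neuron `i` over all binary masks, and
hence also maximizes the total violation; the maximization decomposes
row-wise. -/
theorem activeSet_selection_most_violated
    {m n : ℕ} (W : Fin m → Fin n → ℝ) (b : Fin m → ℝ) (l u : Fin n → ℝ)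
    (hlu : ∀ j, l j ≤ u j)
    (x : Fin n → ℝ) (xout z : Fin m → ℝ)
    (Istar : Fin m → Fin n → ℝ)
    (hIstar : ∀ i j, Istar i j =
      if 0 ≤ ((1 - z i) * cLmat W l u i j + z i * cUmat W l u i j - x j) * W i j
      then 1 else 0) :
    (∀ I : Fin m → Fin n → ℝ, (∀ i j, I i j = 0 ∨ I i j = 1) →
      ∀ i, violation W b l u I x xout z i ≤ violation W b l u Istar x xout z i) ∧
    (∀ I : Fin m → Fin n → ℝ, (∀ i j, I i j = 0 ∨ I i j = 1) →
      (∑ i, violation W b l u I x xout z i)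
        ≤ ∑ i, violation W b l u Istar x xout z i) := by
  have key : ∀ (I : Fin m → Fin n → ℝ), (∀ i j, I i j = 0 ∨ I i j = 1) →
      ∀ i, violation W b l u I x xout z i ≤ violation W b l u Istar x xout z i := by
    intro I hI i
    have expand : ∀ J : Fin m → Fin n → ℝ, andersonRHS W b l u J x z i =
        z i * b i + ∑ j, (W i j * J i j * x j
          - W i j * J i j * cLmat W l u i j * (1 - z i)
          + W i j * (1 - J i j) * cUmat W l u i j * z i) := by
      intro J
      simp only [andersonRHS, Finset.sum_add_distrib, Finset.sum_sub_distrib,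
        Finset.sum_mul]
      ring
    have hsum : andersonRHS W b l u Istar x z i ≤ andersonRHS W b l u I x z i := by
      rw [expand, expand]
      refine add_le_add (le_refl _) (Finset.sum_le_sum fun j _ => ?_)
      set c := ((1 - z i) * cLmat W l u i j + z i * cUmat W l u i j - x j) * W i j with hc
      have h1 : I i j * c ≤ Istar i j * c := by
        rw [hIstar i j, ← hc]
        by_cases hpos : 0 ≤ c
        · simp only [hpos, if_true]
          rcases hI i j with h | h <;> rw [h] <;> nlinarith
        · simp only [hpos, if_false]
          rcases hI i j with h | h <;> rw [h] <;> nlinarith [lt_of_not_ge hpos]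
      have e : ∀ J : ℝ, W i j * J * x j - W i j * J * cLmat W l u i j * (1 - z i)
          + W i j * (1 - J) * cUmat W l u i j * z i
          = z i * (W i j * cUmat W l u i j) - J * c := by
        intro J; rw [hc]; ring
      rw [e (Istar i j), e (I i j)]
      linarith
    simpa [violation] using sub_le_sub_left hsum (xout i)
  exact ⟨key, fun I hI => Finset.sum_le_sum fun i _ => key I hI i⟩
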